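/- Let p ∈ ℂ, let m ≥ 1 be an integer, and let h be a nonconstant holomorphic function on a neighborhood of p such that h − h(p) has a zero of order exactly m at p (i.e. h(z) = a + b(z−p)^m + higher-order terms with b ≠ 0). Then (z−p)²·S(h)(z) → (1−m²)/2 as z → p, where S(h) is the Schwarzian derivative of h (defined on a punctured neighborhood of p away from the zeros of h', which do not accumulate at p). -/

import Mathlib

open Complex Filter

noncomputable section

/-- The Schwarzian derivative `S(f) = (f''/f')' - (1/2)(f''/f')²`. -/
def schwarzian (f : ℂ → ℂ) (z : ℂ) : ℂ :=
  deriv (fun w => deriv (deriv f) w / deriv f w) z -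
    (1 / 2) * (deriv (deriv f) z / deriv f z) ^ 2

private lemma analyticAt_deriv' {f : ℂ → ℂ} {p : ℂ} (h : AnalyticAt ℂ f p) :
    AnalyticAt ℂ (deriv f) p := by
  obtain ⟨s, hs, hf⟩ := h.exists_mem_nhds_analyticOnNhd
  exact hf.deriv p (mem_of_mem_nhds hs)

private lemma pow_key (n : ℕ) (x : ℂ) : (n : ℂ) * x ^ (n - 1) * x = (n : ℂ) * x ^ n := by
  cases n with
  | zero => simp
  | succ k => simp [pow_succ]; ring

/-- If `h − h(p)` has a zero of order exactly `m ≥ 1` at `p` (i.e.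
`h(z) = h(p) + (z−p)^m φ(z)` near `p` with `φ` holomorphic, `φ(p) ≠ 0`),
then `(z−p)² S(h)(z) → (1−m²)/2` as `z → p`. -/
theorem schwarzian_asymptotics_at_ramification_point
    (p : ℂ) (m : ℕ) (hm : 1 ≤ m) (h φ : ℂ → ℂ)
    (hφ : AnalyticAt ℂ φ p) (hφ0 : φ p ≠ 0)
    (hh : ∀ᶠ z in nhds p, h z = h p + (z - p) ^ m * φ z) :
    Tendsto (fun z : ℂ => (z - p) ^ 2 * schwarzian h z)
      (nhdsWithin p {p}ᶜ) (nhds ((1 - (m : ℂ) ^ 2) / 2)) := by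
  obtain ⟨n, rfl⟩ : ∃ n, m = n + 1 := ⟨m - 1, (Nat.succ_pred_eq_of_pos hm).symm⟩
  set c : ℂ := (n : ℂ) with hc
  -- ψ : the "unit" factor of h'
  set ψ : ℂ → ℂ := fun z => (c + 1) * φ z + (z - p) * deriv φ z with hψdef
  have hφ' : AnalyticAt ℂ (deriv φ) p := analyticAt_deriv' hφ
  have hψ : AnalyticAt ℂ ψ p :=
    (analyticAt_const.mul hφ).add ((analyticAt_id.sub analyticAt_const).mul hφ')
  have hψ0 : ψ p ≠ 0 := by
    have : ψ p = (c + 1) * φ p := by simp [hψdef]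
    rw [this]
    apply mul_ne_zero _ hφ0
    have h1 : (c : ℂ) + 1 = ((n + 1 : ℕ) : ℂ) := by push_cast [hc]; ring
    rw [h1]
    exact Nat.cast_ne_zero.mpr (Nat.succ_ne_zero n)
  -- Step 1: deriv h = (z-p)^n * ψ z near p
  have hd1 : ∀ᶠ z in nhds p, deriv h z = (z - p) ^ n * ψ z := by
    filter_upwards [hh.eventually_nhds, hφ.eventually_analyticAt] with z hz hφz
    have heq : h =ᶠ[nhds z] fun w => h p + (w - p) ^ (n + 1) * φ w := hz
    rw [heq.deriv_eq]
    have h1 : HasDerivAt (fun w : ℂ => (w - p) ^ (n + 1)) ((↑(n + 1) : ℂ) * (z - p) ^ n) z := by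
      simpa [Function.comp_def] using ((hasDerivAt_pow (n + 1) (z - p)).comp z ((hasDerivAt_id z).sub_const p))
    have H : HasDerivAt (fun w => h p + (w - p) ^ (n + 1) * φ w)
        ((↑(n + 1) : ℂ) * (z - p) ^ n * φ z + (z - p) ^ (n + 1) * deriv φ z) z :=
      ((h1.mul hφz.differentiableAt.hasDerivAt)).const_add (h p)
    rw [H.deriv]
    simp only [hψdef, hc]
    push_cast
    rw [pow_succ]
    ring
  -- Step 2: deriv (deriv h) near p
  have hd2 : ∀ᶠ z in nhds p, deriv (deriv h) z
      = c * (z - p) ^ (n - 1) * ψ z + (z - p) ^ n * deriv ψ z := by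
    filter_upwards [hd1.eventually_nhds, hψ.eventually_analyticAt] with z hz hψz
    have heq : deriv h =ᶠ[nhds z] fun w => (w - p) ^ n * ψ w := hz
    rw [heq.deriv_eq]
    have h1 : HasDerivAt (fun w : ℂ => (w - p) ^ n) ((n : ℂ) * (z - p) ^ (n - 1)) z := by
      simpa [Function.comp_def] using ((hasDerivAt_pow n (z - p)).comp z ((hasDerivAt_id z).sub_const p))
    have H : HasDerivAt (fun w => (w - p) ^ n * ψ w)
        ((n : ℂ) * (z - p) ^ (n - 1) * ψ z + (z - p) ^ n * deriv ψ z) z :=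
      h1.mul hψz.differentiableAt.hasDerivAt
    rw [H.deriv, hc]
  have hψne : ∀ᶠ z in nhds p, ψ z ≠ 0 := hψ.continuousAt.eventually_ne hψ0
  -- Step 3: ratio formula on punctured neighborhood
  have hG : ∀ᶠ z in nhdsWithin p {p}ᶜ,
      deriv (deriv h) z / deriv h z = c / (z - p) + deriv ψ z / ψ z := by
    filter_upwards [(hd1).filter_mono nhdsWithin_le_nhds,
      (hd2).filter_mono nhdsWithin_le_nhds,
      (hψne).filter_mono nhdsWithin_le_nhds, self_mem_nhdsWithin] with z h1 h2 hψz hzp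
    have hz : z - p ≠ 0 := sub_ne_zero.2 (by simpa using hzp)
    have hpow : (z - p) ^ n ≠ 0 := pow_ne_zero _ hz
    rw [h1, h2]
    have key : c * (z - p) ^ (n - 1) = c * (z - p) ^ n / (z - p) := by
      rw [eq_div_iff hz]; exact pow_key n (z - p)
    rw [key]
    field_simp
  -- the analytic "regular part" g = ψ'/ψ
  set g : ℂ → ℂ := fun w => deriv ψ w / ψ w with hgdef
  have hgA : AnalyticAt ℂ g p := (analyticAt_deriv' hψ).div hψ hψ0
  -- Step 4: derivative of the ratio on punctured neighborhood
  have hG' : ∀ᶠ z in nhdsWithin p {p}ᶜ,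
      deriv (fun w => deriv (deriv h) w / deriv h w) z
        = -c / (z - p) ^ 2 + deriv g z := by
    have hGnhds : ∀ᶠ z in nhds p, z ≠ p →
        deriv (deriv h) z / deriv h z = c / (z - p) + g z := by
      have := eventually_nhdsWithin_iff.mp hG
      filter_upwards [this] with z hz hzp
      exact hz (by simpa using hzp)
    filter_upwards [hGnhds.eventually_nhds.filter_mono nhdsWithin_le_nhds,
      (hψ.eventually_analyticAt.eventually_nhds).filter_mono nhdsWithin_le_nhds,
      (hψne.eventually_nhds).filter_mono nhdsWithin_le_nhds,
      self_mem_nhdsWithin] with z hz hψz hψnez hzp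
    have hzp' : z ≠ p := by simpa using hzp
    have heq : (fun w => deriv (deriv h) w / deriv h w)
        =ᶠ[nhds z] fun w => c / (w - p) + g w := by
      filter_upwards [hz, eventually_ne_nhds hzp'] with w hw hwp
      exact hw hwp
    rw [heq.deriv_eq]
    have hzsub : z - p ≠ 0 := sub_ne_zero.2 hzp'
    have h1 : HasDerivAt (fun w : ℂ => c / (w - p)) (-c / (z - p) ^ 2) z := by
      have hinv : HasDerivAt (fun w : ℂ => (w - p)⁻¹) (-((z - p) ^ 2)⁻¹) z := by
        simpa [Function.comp_def] using ((hasDerivAt_inv hzsub).comp z ((hasDerivAt_id z).sub_const p))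
      have h2 := hinv.const_mul c
      have he : c * -((z - p) ^ 2)⁻¹ = -c / (z - p) ^ 2 := by ring
      rw [he] at h2
      simpa [div_eq_mul_inv] using h2
    have hgz : AnalyticAt ℂ ψ z := hψz.self_of_nhds
    have hψz0 : ψ z ≠ 0 := hψnez.self_of_nhds
    have hgd : DifferentiableAt ℂ g z := ((analyticAt_deriv' hgz).div hgz hψz0).differentiableAt
    rw [deriv_fun_add h1.differentiableAt hgd, h1.deriv]
  -- Step 5: express (z-p)^2 * schwarzian as a continuous function
  set F : ℂ → ℂ := fun z => -c - c ^ 2 / 2 - c * (z - p) * g z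
      + (z - p) ^ 2 * deriv g z - (z - p) ^ 2 * (g z) ^ 2 / 2 with hFdef
  have hFeq : ∀ᶠ z in nhdsWithin p {p}ᶜ,
      (z - p) ^ 2 * schwarzian h z = F z := by
    filter_upwards [hG, hG', self_mem_nhdsWithin] with z h1 h2 hzp
    have hz : z - p ≠ 0 := sub_ne_zero.2 (by simpa using hzp)
    unfold schwarzian
    rw [h1, h2, hFdef]
    field_simp
    ring
  -- Step 6: F is continuous at p, and F p = (1 - m²)/2
  have hgd : AnalyticAt ℂ (deriv g) p := analyticAt_deriv' hgA
  have hFc : ContinuousAt F p := by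
    have cg : ContinuousAt g p := hgA.continuousAt
    have cgd : ContinuousAt (deriv g) p := hgd.continuousAt
    have cid : ContinuousAt (fun z : ℂ => z - p) p := continuousAt_id.sub continuousAt_const
    exact (((continuousAt_const.sub continuousAt_const).sub
        ((continuousAt_const.mul cid).mul cg)).add ((cid.pow 2).mul cgd)).sub
      (((cid.pow 2).mul (cg.pow 2)).div continuousAt_const (by norm_num))
  have hFp : F p = (1 - (c + 1) ^ 2) / 2 := by
    simp only [hFdef, sub_self]
    ring
  have hlim : Tendsto F (nhdsWithin p {p}ᶜ) (nhds (F p)) :=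
    hFc.tendsto.mono_left nhdsWithin_le_nhds
  have hval : F p = (1 - (↑(n + 1) : ℂ) ^ 2) / 2 := by
    rw [hFp, hc]; push_cast; ring
  have heq : F =ᶠ[nhdsWithin p {p}ᶜ] fun z => (z - p) ^ 2 * schwarzian h z :=
    hFeq.mono fun z hz => hz.symm
  exact Tendsto.congr' heq (by rwa [hval] at hlim)
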